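/- Let X be a d-complex, 0 ≤ k ≤ d, and let A ⊆ X(k) be a minimal k-cochain. Then A is locally minimal, i.e. for every nonempty face σ ∈ X, the localization I_σ(A) is a minimal cochain of the link X_σ. -/

import Mathlib

open Finset
open scoped symmDiff

noncomputable section

namespace HDExpansion

/-- The faces of cardinality `m` (i.e. of dimension `m - 1`) of a complex `X`. -/
def facesC (X : Finset (Finset ℕ)) (m : ℕ) : Finset (Finset ℕ) :=
  X.filter fun σ => σ.card = m

/-- `X` is a finite, pure, `d`-dimensional abstract simplicial complex:
it is nonempty, closed under subsets, and every face is contained in a face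
of cardinality `d + 1`. -/
def IsComplex (X : Finset (Finset ℕ)) (d : ℕ) : Prop :=
  X.Nonempty ∧ (∀ σ ∈ X, ∀ τ ⊆ σ, τ ∈ X) ∧
    ∀ σ ∈ X, ∃ F ∈ X, σ ⊆ F ∧ F.card = d + 1

/-- The weight of a face `σ` in the `d`-complex `X`:
`w(σ) = |{F ∈ X(d) : σ ⊆ F}| / (binom(d+1,|σ|)·|X(d)|)`. -/
def weightC (X : Finset (Finset ℕ)) (d : ℕ) (σ : Finset ℕ) : ℝ :=
  (((facesC X (d + 1)).filter fun F => σ ⊆ F).card : ℝ) /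
    (((d + 1).choose σ.card * (facesC X (d + 1)).card : ℕ) : ℝ)

/-- The norm of a cochain: `‖A‖ = Σ_{σ∈A} w(σ)`. -/
def normC (X : Finset (Finset ℕ)) (d : ℕ) (A : Finset (Finset ℕ)) : ℝ :=
  ∑ σ ∈ A, weightC X d σ

/-- The coboundary map, sending a cochain of faces of cardinality `m`
(dimension `m-1`) to the set of faces of cardinality `m+1` containing an odd
number of its elements. -/
def cobC (X : Finset (Finset ℕ)) (m : ℕ) (A : Finset (Finset ℕ)) : Finset (Finset ℕ) :=
  (facesC X (m + 1)).filter fun τ => (A.filter fun σ => σ ⊆ τ).card % 2 = 1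

/-- `A` (a cochain of faces of cardinality `m`, i.e. dimension `m-1`) is a
coboundary: `A ∈ B^{m-1}`. -/
def IsCobound (X : Finset (Finset ℕ)) (m : ℕ) (A : Finset (Finset ℕ)) : Prop :=
  ∃ γ ⊆ facesC X (m - 1), cobC X (m - 1) γ = A

/-- `A` (a cochain of faces of cardinality `m`, i.e. dimension `m-1`) is a
cocycle: `A ∈ Z^{m-1}`. -/
def IsCocycle (X : Finset (Finset ℕ)) (m : ℕ) (A : Finset (Finset ℕ)) : Prop :=
  A ⊆ facesC X m ∧ cobC X m A = ∅

/-- `min_{b ∈ B^{m-1}} ‖A + b‖` (cochain sum is symmetric difference `∆`). -/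
def distB (X : Finset (Finset ℕ)) (d m : ℕ) (A : Finset (Finset ℕ)) : ℝ :=
  sInf {r : ℝ | ∃ b, IsCobound X m b ∧ r = normC X d (A ∆ b)}

/-- `min_{z ∈ Z^{m-1}} ‖A + z‖` (cochain sum is symmetric difference `∆`). -/
def distZ (X : Finset (Finset ℕ)) (d m : ℕ) (A : Finset (Finset ℕ)) : ℝ :=
  sInf {r : ℝ | ∃ z, IsCocycle X m z ∧ r = normC X d (A ∆ z)}

/-- The link `X_σ = {τ : σ ∩ τ = ∅, σ ∪ τ ∈ X}`. -/
def link (X : Finset (Finset ℕ)) (σ : Finset ℕ) : Finset (Finset ℕ) :=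
  (X.filter fun ρ => σ ⊆ ρ).image fun ρ => ρ \ σ

/-- The localization `I_σ(A) = {τ ∈ X_σ : τ ∪ σ ∈ A}`. -/
def locF (σ : Finset ℕ) (A : Finset (Finset ℕ)) : Finset (Finset ℕ) :=
  (A.filter fun ρ => σ ⊆ ρ).image fun ρ => ρ \ σ

/-- The lifting `I^σ(A) = {τ ∪ σ : τ ∈ A}`. -/
def liftF (σ : Finset ℕ) (A : Finset (Finset ℕ)) : Finset (Finset ℕ) :=
  A.image fun τ => τ ∪ σ

/-- A cochain of faces of cardinality `m` is minimal if `‖A‖ ≤ ‖A + b‖` for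
every coboundary `b`. -/
def IsMinimal (Y : Finset (Finset ℕ)) (dY m : ℕ) (A : Finset (Finset ℕ)) : Prop :=
  ∀ b, IsCobound Y m b → normC Y dY A ≤ normC Y dY (A ∆ b)

/-- A cochain of faces of cardinality `m` is locally minimal if all its
localizations to links of nonempty faces are minimal. -/
def IsLocallyMinimal (X : Finset (Finset ℕ)) (d m : ℕ) (A : Finset (Finset ℕ)) : Prop :=
  ∀ σ ∈ X, σ ≠ ∅ → IsMinimal (link X σ) (d - σ.card) (m - σ.card) (locF σ A)

/-- `Y` (a `dY`-complex) is a `β`-coboundary expander: for every dimension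
`k = m - 1` with `0 ≤ k ≤ dY - 1` and every `k`-cochain `A ∉ B^k`,
`‖δA‖ ≥ β · min_{b ∈ B^k} ‖A+b‖`. -/
def CobExpander (Y : Finset (Finset ℕ)) (dY : ℕ) (β : ℝ) : Prop :=
  ∀ m : ℕ, 1 ≤ m → m ≤ dY → ∀ A ⊆ facesC Y m, ¬ IsCobound Y m A →
    β * distB Y dY m A ≤ normC Y dY (cobC Y m A)

/-- `E(A,A)`: the edges of `Y` with both vertices in the vertex set `A`
(vertices are identified with singleton faces). -/
def edgesIn (Y : Finset (Finset ℕ)) (A : Finset (Finset ℕ)) : Finset (Finset ℕ) :=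
  (facesC Y 2).filter fun e => ∀ v ∈ e, ({v} : Finset ℕ) ∈ A

/-- `Y` (a `dY`-complex) is an `α`-skeleton expander. -/
def SkelExpander (Y : Finset (Finset ℕ)) (dY : ℕ) (α : ℝ) : Prop :=
  ∀ A ⊆ facesC Y 1, normC Y dY (edgesIn Y A) ≤ 4 * (normC Y dY A ^ 2 + α * normC Y dY A)

/-- The `m`-skeleton of a complex (all faces of dimension at most `m`). -/
def skeleton (X : Finset (Finset ℕ)) (m : ℕ) : Finset (Finset ℕ) :=
  X.filter fun σ => σ.card ≤ m + 1


/-! ### Auxiliary lemmas -/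

lemma inter_empty_iff' {τ σ : Finset ℕ} : τ ∩ σ = ∅ ↔ ∀ a ∈ τ, a ∉ σ := by
  simp only [Finset.eq_empty_iff_forall_notMem, Finset.mem_inter, not_and]

lemma union_sdiff_self' {τ σ : Finset ℕ} (h : τ ∩ σ = ∅) : (τ ∪ σ) \ σ = τ := by
  rw [inter_empty_iff'] at h
  ext a
  simp only [Finset.mem_sdiff, Finset.mem_union]
  exact ⟨fun ⟨h1, h2⟩ => h1.resolve_right h2, fun ha => ⟨Or.inl ha, h a ha⟩⟩

lemma sdiff_union_self' {τ σ : Finset ℕ} (h : σ ⊆ τ) : (τ \ σ) ∪ σ = τ := by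
  ext a
  simp only [Finset.mem_sdiff, Finset.mem_union]
  constructor
  · rintro (⟨h1, _⟩ | h1)
    · exact h1
    · exact h h1
  · intro ha
    by_cases hs : a ∈ σ
    · exact Or.inr hs
    · exact Or.inl ⟨ha, hs⟩

lemma weightC_nonneg (X : Finset (Finset ℕ)) (d : ℕ) (σ : Finset ℕ) :
    0 ≤ weightC X d σ := by
  apply div_nonneg <;> positivity

lemma normC_nonneg (X : Finset (Finset ℕ)) (d : ℕ) (A : Finset (Finset ℕ)) :
    0 ≤ normC X d A :=
  Finset.sum_nonneg fun σ _ => weightC_nonneg X d σ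

lemma normC_mono (X : Finset (Finset ℕ)) (d : ℕ) {A B : Finset (Finset ℕ)} (h : A ⊆ B) :
    normC X d A ≤ normC X d B :=
  Finset.sum_le_sum_of_subset_of_nonneg h fun σ _ _ => weightC_nonneg X d σ

lemma mem_facesC {X : Finset (Finset ℕ)} {m : ℕ} {τ : Finset ℕ} :
    τ ∈ facesC X m ↔ τ ∈ X ∧ τ.card = m := Finset.mem_filter

lemma mem_locF {σ : Finset ℕ} {A : Finset (Finset ℕ)} {τ : Finset ℕ} :
    τ ∈ locF σ A ↔ τ ∩ σ = ∅ ∧ τ ∪ σ ∈ A := by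
  simp only [locF, Finset.mem_image, Finset.mem_filter]
  constructor
  · rintro ⟨ρ, ⟨hρ, hσρ⟩, rfl⟩
    refine ⟨by simp [Finset.sdiff_inter_self], ?_⟩
    rwa [Finset.sdiff_union_of_subset hσρ]
  · rintro ⟨h1, h2⟩
    exact ⟨τ ∪ σ, ⟨h2, Finset.subset_union_right⟩, union_sdiff_self' h1⟩

lemma mem_link {X : Finset (Finset ℕ)} {σ τ : Finset ℕ} :
    τ ∈ link X σ ↔ τ ∩ σ = ∅ ∧ τ ∪ σ ∈ X := mem_locF

lemma mem_liftF {σ : Finset ℕ} {A : Finset (Finset ℕ)} (hd : ∀ ρ ∈ A, ρ ∩ σ = ∅)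
    {τ : Finset ℕ} : τ ∈ liftF σ A ↔ σ ⊆ τ ∧ τ \ σ ∈ A := by
  simp only [liftF, Finset.mem_image]
  constructor
  · rintro ⟨ρ, hρ, rfl⟩
    exact ⟨Finset.subset_union_right, by rwa [union_sdiff_self' (hd ρ hρ)]⟩
  · rintro ⟨h1, h2⟩
    exact ⟨τ \ σ, h2, sdiff_union_self' h1⟩

lemma liftF_symmDiff {σ : Finset ℕ} {P Q : Finset (Finset ℕ)}
    (hP : ∀ ρ ∈ P, ρ ∩ σ = ∅) (hQ : ∀ ρ ∈ Q, ρ ∩ σ = ∅) :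
    liftF σ (P ∆ Q) = liftF σ P ∆ liftF σ Q := by
  have hPQ : ∀ ρ ∈ P ∆ Q, ρ ∩ σ = ∅ := by
    intro ρ hρ
    rcases Finset.mem_symmDiff.mp hρ with ⟨h, _⟩ | ⟨h, _⟩
    · exact hP ρ h
    · exact hQ ρ h
  ext τ
  rw [mem_liftF hPQ, Finset.mem_symmDiff, Finset.mem_symmDiff, mem_liftF hP, mem_liftF hQ]
  by_cases hστ : σ ⊆ τ <;> simp [hστ]

lemma normC_liftF {X Y : Finset (Finset ℕ)} {d s m' : ℕ} {σ : Finset ℕ} {c : ℝ}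
    (hw : ∀ τ ∈ facesC Y m', weightC X d (τ ∪ σ) = c * weightC Y (d - s) τ)
    {T : Finset (Finset ℕ)} (hT : T ⊆ facesC Y m')
    (hd : ∀ τ ∈ T, τ ∩ σ = ∅) :
    normC X d (liftF σ T) = c * normC Y (d - s) T := by
  unfold normC liftF
  rw [Finset.sum_image, Finset.mul_sum]
  · exact Finset.sum_congr rfl fun τ hτ => hw τ (hT hτ)
  · intro x hx y hy hxy
    have := congrArg (· \ σ) hxy
    simpa [union_sdiff_self' (hd x hx), union_sdiff_self' (hd y hy)] using this

/-- A minimal cochain is locally minimal. -/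
theorem statement_8 (d k : ℕ) (hk : k ≤ d) (X : Finset (Finset ℕ)) (hX : IsComplex X d)
    (A : Finset (Finset ℕ)) (hA : A ⊆ facesC X (k + 1))
    (hmin : IsMinimal X d (k + 1) A) :
    IsLocallyMinimal X d (k + 1) A := by
  obtain ⟨hXne, hXdn, hXpure⟩ := hX
  intro σ hσX hσne
  set s := σ.card with hs
  by_cases hcase : s ≤ k
  · -- Main case: σ.card ≤ k
    intro b' hb'
    obtain ⟨γ', hγ'sub, hγ'⟩ := hb'
    rw [show k + 1 - s - 1 = k - s from by omega] at hγ'sub hγ'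
    have hm2 : k - s + 1 = k + 1 - s := by omega
    have hsd : s ≤ d := le_trans hcase hk
    set Y := link X σ with hYdef
    -- nonemptiness of top faces
    have hXtop : (facesC X (d + 1)).Nonempty := by
      obtain ⟨σ0, hσ0⟩ := hXne
      obtain ⟨F, hF, _, hFc⟩ := hXpure σ0 hσ0
      exact ⟨F, mem_facesC.mpr ⟨hF, hFc⟩⟩
    have hYtop : (facesC Y (d - s + 1)).Nonempty := by
      obtain ⟨F, hF, hσF, hFc⟩ := hXpure σ hσX
      refine ⟨F \ σ, mem_facesC.mpr ⟨mem_link.mpr ⟨?_, ?_⟩, ?_⟩⟩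
      · simp [Finset.sdiff_inter_self]
      · rwa [Finset.sdiff_union_of_subset hσF]
      · rw [Finset.card_sdiff_of_subset hσF]; omega
    -- the constant relating weights
    set c : ℝ := (((d - s + 1).choose (k + 1 - s) * (facesC Y (d - s + 1)).card : ℕ) : ℝ) /
      (((d + 1).choose (k + 1) * (facesC X (d + 1)).card : ℕ) : ℝ) with hc
    have hch1 : 0 < (d - s + 1).choose (k + 1 - s) := Nat.choose_pos (by omega)
    have hch2 : 0 < (d + 1).choose (k + 1) := Nat.choose_pos (by omega)
    have hcard1 : 0 < (facesC Y (d - s + 1)).card := Finset.card_pos.mpr hYtop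
    have hcard2 : 0 < (facesC X (d + 1)).card := Finset.card_pos.mpr hXtop
    have hden1 : (((d - s + 1).choose (k + 1 - s) * (facesC Y (d - s + 1)).card : ℕ) : ℝ) ≠ 0 := by
      exact_mod_cast (Nat.mul_pos hch1 hcard1).ne'
    have hden2 : (((d + 1).choose (k + 1) * (facesC X (d + 1)).card : ℕ) : ℝ) ≠ 0 := by
      exact_mod_cast (Nat.mul_pos hch2 hcard2).ne'
    have hcpos : 0 < c := by
      rw [hc]
      exact div_pos (by exact_mod_cast Nat.mul_pos hch1 hcard1)
        (by exact_mod_cast Nat.mul_pos hch2 hcard2)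
    -- the weight identity between X and the link
    have hw : ∀ τ ∈ facesC Y (k + 1 - s), weightC X d (τ ∪ σ) = c * weightC Y (d - s) τ := by
      intro τ hτ
      obtain ⟨hτY, hτc⟩ := mem_facesC.mp hτ
      obtain ⟨hτσ, hτσX⟩ := mem_link.mp hτY
      have hdj : Disjoint τ σ := Finset.disjoint_iff_inter_eq_empty.mpr hτσ
      have hN : ((facesC X (d + 1)).filter fun F => τ ∪ σ ⊆ F).card
          = ((facesC Y (d - s + 1)).filter fun F => τ ⊆ F).card := by
        apply Finset.card_bij' (fun F _ => F \ σ) (fun F _ => F ∪ σ)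
        · intro F hF
          obtain ⟨hF1, hF2⟩ := Finset.mem_filter.mp hF
          obtain ⟨hFX, hFc⟩ := mem_facesC.mp hF1
          have hσF : σ ⊆ F := (Finset.union_subset_iff.mp hF2).2
          refine Finset.mem_filter.mpr ⟨mem_facesC.mpr ⟨mem_link.mpr ⟨?_, ?_⟩, ?_⟩, ?_⟩
          · simp [Finset.sdiff_inter_self]
          · rwa [Finset.sdiff_union_of_subset hσF]
          · rw [Finset.card_sdiff_of_subset hσF]; omega
          · rw [Finset.subset_sdiff]
            exact ⟨(Finset.union_subset_iff.mp hF2).1, hdj⟩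
        · intro F hF
          obtain ⟨hF1, hF2⟩ := Finset.mem_filter.mp hF
          obtain ⟨hFY, hFc⟩ := mem_facesC.mp hF1
          obtain ⟨hFσ, hFX⟩ := mem_link.mp hFY
          refine Finset.mem_filter.mpr ⟨mem_facesC.mpr ⟨hFX, ?_⟩, ?_⟩
          · rw [Finset.card_union_of_disjoint (Finset.disjoint_iff_inter_eq_empty.mpr hFσ)]
            omega
          · exact Finset.union_subset_union hF2 Finset.Subset.rfl
        · intro F hF
          obtain ⟨hF1, hF2⟩ := Finset.mem_filter.mp hF
          exact sdiff_union_self' ((Finset.union_subset_iff.mp hF2).2)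
        · intro F hF
          obtain ⟨hF1, _⟩ := Finset.mem_filter.mp hF
          exact union_sdiff_self' (mem_link.mp (mem_facesC.mp hF1).1).1
      have hcu : (τ ∪ σ).card = k + 1 := by
        rw [Finset.card_union_of_disjoint hdj]; omega
      rw [weightC, weightC, hcu, hτc, hN, hc]
      field_simp
    -- facts about γ' and b'
    have hγ'disj : ∀ ρ ∈ γ', ρ ∩ σ = ∅ := fun ρ hρ => (mem_link.mp (mem_facesC.mp (hγ'sub hρ)).1).1
    have hγ'card : ∀ ρ ∈ γ', ρ.card = k - s := fun ρ hρ => (mem_facesC.mp (hγ'sub hρ)).2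
    have hγ'X : ∀ ρ ∈ γ', ρ ∪ σ ∈ X := fun ρ hρ => (mem_link.mp (mem_facesC.mp (hγ'sub hρ)).1).2
    have hb'sub : b' ⊆ facesC Y (k + 1 - s) := by
      rw [← hγ', ← hm2]
      exact Finset.filter_subset _ _
    have hb'disj : ∀ ρ ∈ b', ρ ∩ σ = ∅ := fun ρ hρ => (mem_link.mp (mem_facesC.mp (hb'sub hρ)).1).1
    have hcobdisj : ∀ ρ ∈ cobC Y (k - s) γ', ρ ∩ σ = ∅ := by rw [hγ']; exact hb'disj
    -- the coboundary of the lifted chain is the lift of the coboundary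
    have hcoblift : cobC X k (liftF σ γ') = liftF σ (cobC Y (k - s) γ') := by
      ext τ
      rw [mem_liftF hcobdisj]
      by_cases hστ : σ ⊆ τ
      · have hcount : ((liftF σ γ').filter fun ρ => ρ ⊆ τ).card
            = (γ'.filter fun ρ => ρ ⊆ τ \ σ).card := by
          unfold liftF
          rw [Finset.filter_image, Finset.card_image_of_injOn]
          · congr 1
            apply Finset.filter_congr
            intro ρ hρ
            have hd := Finset.disjoint_iff_inter_eq_empty.mpr (hγ'disj ρ hρ)
            rw [Finset.union_subset_iff, Finset.subset_sdiff]
            tauto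
          · intro x hx y hy hxy
            simp only [Finset.coe_filter, Set.mem_setOf_eq] at hx hy
            have hx' := hγ'disj x hx.1
            have hy' := hγ'disj y hy.1
            have := congrArg (· \ σ) hxy
            simpa [union_sdiff_self' hx', union_sdiff_self' hy'] using this
        have hfaces : τ ∈ facesC X (k + 1) ↔ τ \ σ ∈ facesC Y (k - s + 1) := by
          rw [mem_facesC, mem_facesC, mem_link]
          have hcs : s ≤ τ.card := hs ▸ Finset.card_le_card hστ
          constructor
          · rintro ⟨hX1, hX2⟩
            refine ⟨⟨by simp [Finset.sdiff_inter_self], by rwa [sdiff_union_self' hστ]⟩, ?_⟩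
            rw [Finset.card_sdiff_of_subset hστ]; omega
          · rintro ⟨⟨_, hX1⟩, hX2⟩
            rw [sdiff_union_self' hστ] at hX1
            refine ⟨hX1, ?_⟩
            rw [Finset.card_sdiff_of_subset hστ] at hX2
            omega
        simp only [cobC, Finset.mem_filter]
        rw [hcount, hfaces]
        simp [hστ]
      · have hempty : ((liftF σ γ').filter fun ρ => ρ ⊆ τ) = ∅ := by
          rw [Finset.filter_eq_empty_iff]
          intro ρ hρ
          obtain ⟨ρ', _, rfl⟩ := Finset.mem_image.mp hρ
          exact fun hsub => hστ (Finset.subset_union_right.trans hsub)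
        simp only [cobC, Finset.mem_filter, hempty]
        simp [hστ]
    -- the lifted cochain is a coboundary of X
    have hbcob : IsCobound X (k + 1) (liftF σ b') := by
      refine ⟨liftF σ γ', ?_, ?_⟩
      · intro ρ hρ
        obtain ⟨ρ', hρ', rfl⟩ := Finset.mem_image.mp hρ
        refine mem_facesC.mpr ⟨hγ'X ρ' hρ', ?_⟩
        rw [Finset.card_union_of_disjoint (Finset.disjoint_iff_inter_eq_empty.mpr (hγ'disj ρ' hρ'))]
        have := hγ'card ρ' hρ'
        omega
      · show cobC X k (liftF σ γ') = liftF σ b'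
        rw [hcoblift, hγ']
    -- localization facts
    have hA'sub : locF σ A ⊆ facesC Y (k + 1 - s) := by
      intro τ hτ
      obtain ⟨hτσ, hτA⟩ := mem_locF.mp hτ
      obtain ⟨hτX, hτc⟩ := mem_facesC.mp (hA hτA)
      refine mem_facesC.mpr ⟨mem_link.mpr ⟨hτσ, hτX⟩, ?_⟩
      rw [Finset.card_union_of_disjoint (Finset.disjoint_iff_inter_eq_empty.mpr hτσ)] at hτc
      omega
    have hA'disj : ∀ τ ∈ locF σ A, τ ∩ σ = ∅ := fun τ hτ => (mem_locF.mp hτ).1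
    have hliftA' : liftF σ (locF σ A) = A.filter fun ρ => σ ⊆ ρ := by
      ext τ
      rw [mem_liftF hA'disj, Finset.mem_filter]
      constructor
      · rintro ⟨h1, h2⟩
        obtain ⟨_, h3⟩ := mem_locF.mp h2
        rw [sdiff_union_self' h1] at h3
        exact ⟨h3, h1⟩
      · rintro ⟨h1, h2⟩
        refine ⟨h2, mem_locF.mpr ⟨by simp [Finset.sdiff_inter_self], ?_⟩⟩
        rwa [sdiff_union_self' h2]
    have hbmem : ∀ τ ∈ liftF σ b', σ ⊆ τ := by
      intro τ hτ
      obtain ⟨ρ, _, rfl⟩ := Finset.mem_image.mp hτ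
      exact Finset.subset_union_right
    have h1 : (A ∆ liftF σ b').filter (fun ρ => σ ⊆ ρ)
        = (A.filter fun ρ => σ ⊆ ρ) ∆ liftF σ b' := by
      ext τ
      simp only [Finset.mem_filter, Finset.mem_symmDiff]
      have := hbmem τ
      by_cases hστ : σ ⊆ τ <;> tauto
    have h2 : (A ∆ liftF σ b').filter (fun ρ => ¬ σ ⊆ ρ) = A.filter fun ρ => ¬ σ ⊆ ρ := by
      ext τ
      simp only [Finset.mem_filter, Finset.mem_symmDiff]
      have := hbmem τ
      by_cases hστ : σ ⊆ τ <;> tauto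
    have hsplit : ∀ S : Finset (Finset ℕ), normC X d S =
        normC X d (S.filter fun ρ => σ ⊆ ρ) + normC X d (S.filter fun ρ => ¬ σ ⊆ ρ) :=
      fun S => (Finset.sum_filter_add_sum_filter_not S _ _).symm
    have hsymsub : locF σ A ∆ b' ⊆ facesC Y (k + 1 - s) := by
      intro τ hτ
      rcases Finset.mem_symmDiff.mp hτ with ⟨h, _⟩ | ⟨h, _⟩
      exacts [hA'sub h, hb'sub h]
    have hsymdisj : ∀ τ ∈ locF σ A ∆ b', τ ∩ σ = ∅ :=
      fun τ hτ => (mem_link.mp (mem_facesC.mp (hsymsub hτ)).1).1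
    have hnormA' := normC_liftF hw hA'sub hA'disj
    have hnormAB := normC_liftF hw hsymsub hsymdisj
    have hminuse := hmin (liftF σ b') hbcob
    rw [hsplit A, hsplit (A ∆ liftF σ b'), h1, h2] at hminuse
    have hkey : normC X d (A.filter fun ρ => σ ⊆ ρ)
        ≤ normC X d ((A.filter fun ρ => σ ⊆ ρ) ∆ liftF σ b') := by linarith
    rw [← hliftA', ← liftF_symmDiff hA'disj hb'disj] at hkey
    rw [hnormA', hnormAB] at hkey
    exact (mul_le_mul_iff_right₀ hcpos).mp hkey
  · by_cases hcase2 : s = k + 1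
    · -- σ.card = k + 1 : the localization is at most {∅} and coboundaries consist of singletons
      intro b hb
      obtain ⟨γ', hγ'sub, hγ'⟩ := hb
      have hbsub : b ⊆ facesC (link X σ) (k + 1 - s - 1 + 1) := by
        rw [← hγ']; exact Finset.filter_subset _ _
      have hA0 : ∀ τ ∈ locF σ A, τ = ∅ := by
        intro τ hτ
        obtain ⟨hτσ, hτA⟩ := mem_locF.mp hτ
        have hcard := (mem_facesC.mp (hA hτA)).2
        rw [Finset.card_union_of_disjoint (Finset.disjoint_iff_inter_eq_empty.mpr hτσ)] at hcard
        rw [← Finset.card_eq_zero]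
        omega
      have hsub : locF σ A ⊆ locF σ A ∆ b := by
        intro τ hτ
        refine Finset.mem_symmDiff.mpr (Or.inl ⟨hτ, fun hbm => ?_⟩)
        have h1 := hA0 τ hτ
        have h2 := (mem_facesC.mp (hbsub hbm)).2
        subst h1
        rw [Finset.card_empty] at h2
        omega
      exact normC_mono _ _ hsub
    · -- σ.card ≥ k + 2 : the localization is empty
      intro b hb
      have hloc : locF σ A = ∅ := by
        ext τ
        simp only [mem_locF, Finset.notMem_empty, iff_false, not_and]
        intro hτσ hτA
        have hcard := (mem_facesC.mp (hA hτA)).2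
        rw [Finset.card_union_of_disjoint (Finset.disjoint_iff_inter_eq_empty.mpr hτσ)] at hcard
        omega
      rw [hloc]
      have h0 : normC (link X σ) (d - s) (∅ : Finset (Finset ℕ)) = 0 := Finset.sum_empty
      rw [h0]
      exact normC_nonneg _ _ _

end HDExpansion
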